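/- The conjugation action of SO₃(ℂ) on the set {A ∈ M₃(ℂ) : A ≠ 0, A = Aᵀ, A² = 0} is transitive; that is, any two nonzero symmetric square-zero 3×3 complex matrices are conjugate by an element of SO₃(ℂ). (Note that for g ∈ SO₃(ℂ) one has g A g⁻¹ = g A gᵀ, so conjugation preserves symmetry.) -/

import Mathlib

open Matrix Complex

lemma aux_cross_zero_smul {x y : Fin 3 → ℂ} (hx : x ≠ 0) (h : x ⨯₃ y = 0) :
    ∃ c : ℂ, y = c • x := by
  by_contra hc
  push_neg at hc
  have hli : LinearIndependent ℂ ![x, y] :=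
    (LinearIndependent.pair_iff' hx).mpr fun a => (hc a).symm
  exact crossProduct_ne_zero_iff_linearIndependent.mpr hli h

/-- A nonzero symmetric square-zero 3×3 complex matrix is `u uᵀ` for an isotropic `u`. -/
lemma aux_rank_one {A : Matrix (Fin 3) (Fin 3) ℂ}
    (hA0 : A ≠ 0) (hsym : A = Aᵀ) (hsq : A * A = 0) :
    ∃ u : Fin 3 → ℂ, u ≠ 0 ∧ u ⬝ᵥ u = 0 ∧ A = vecMulVec u u := by
  have hS : ∀ j k, A j k = A k j := fun j k => (congrFun (congrFun hsym j) k).trans (transpose_apply A j k)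
  have hrow : ∀ i j, A i ⬝ᵥ A j = 0 := by
    intro i j
    have h0 : (A * A) i j = 0 := by rw [hsq]; rfl
    rw [mul_apply] at h0
    rw [dotProduct]
    calc ∑ k, A i k * A j k = ∑ k, A i k * A k j :=
          Finset.sum_congr rfl fun k _ => by rw [hS j k]
      _ = 0 := h0
  -- pick a nonzero row
  obtain ⟨i, hi⟩ : ∃ i, A i ≠ 0 := by
    by_contra hrows; push_neg at hrows
    exact hA0 (by ext a b; rw [hrows a]; rfl)
  set x : Fin 3 → ℂ := A i with hx
  have hxx : x ⬝ᵥ x = 0 := hrow i i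
  have hxx' : x 0 * x 0 + x 1 * x 1 + x 2 * x 2 = 0 := by rw [← vec3_dotProduct]; exact hxx
  -- every row is a multiple of x
  have hmul : ∀ j, ∃ c : ℂ, A j = c • x := by
    intro j
    set y : Fin 3 → ℂ := A j with hy
    have hxy : x 0 * y 0 + x 1 * y 1 + x 2 * y 2 = 0 := by
      rw [← vec3_dotProduct]; exact hrow i j
    have hyy : y 0 * y 0 + y 1 * y 1 + y 2 * y 2 = 0 := by
      rw [← vec3_dotProduct]; exact hrow j j
    have h1 : x ⨯₃ (x ⨯₃ y) = 0 := by
      funext k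
      fin_cases k
      · show _ = (0 : ℂ); simp only [cross_apply]; simp
        linear_combination x 0 * hxy - y 0 * hxx'
      · show _ = (0 : ℂ); simp only [cross_apply]; simp
        linear_combination x 1 * hxy - y 1 * hxx'
      · show _ = (0 : ℂ); simp only [cross_apply]; simp
        linear_combination x 2 * hxy - y 2 * hxx'
    have h2 : y ⨯₃ (x ⨯₃ y) = 0 := by
      funext k
      fin_cases k
      · show _ = (0 : ℂ); simp only [cross_apply]; simp
        linear_combination x 0 * hyy - y 0 * hxy
      · show _ = (0 : ℂ); simp only [cross_apply]; simp
        linear_combination x 1 * hyy - y 1 * hxy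
      · show _ = (0 : ℂ); simp only [cross_apply]; simp
        linear_combination x 2 * hyy - y 2 * hxy
    obtain ⟨c, hc⟩ := aux_cross_zero_smul hi h1
    -- show x ⨯₃ y = 0
    have h3 : x ⨯₃ y = 0 := by
      have h4 : y ⨯₃ (c • x) = 0 := by rw [← hc]; exact h2
      rw [LinearMap.map_smul] at h4
      have h5 : y ⨯₃ x = -(c • x) := by rw [← cross_anticomm, hc]
      rw [h5, smul_neg, smul_smul, neg_eq_zero] at h4
      rcases smul_eq_zero.mp h4 with h | h
      · rw [hc, mul_self_eq_zero.mp h, zero_smul]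
      · exact absurd h hi
    exact aux_cross_zero_smul hi h3
  choose c hc using hmul
  obtain ⟨k0, hk0⟩ : ∃ k, x k ≠ 0 := by
    by_contra hk; push_neg at hk
    exact hi (funext fun k => hk k)
  set γ : ℂ := c k0 / x k0 with hγ
  have hAjk : ∀ j k, A j k = γ * x j * x k := by
    intro j k
    have e1 : A j k0 = c j * x k0 := by rw [hc j]; rfl
    have e2 : A k0 j = c k0 * x j := by rw [hc k0]; rfl
    have e3 : c j = γ * x j := by
      rw [hγ, div_mul_eq_mul_div, eq_div_iff hk0]
      linear_combination e2 - e1 + (hS j k0)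
    have e4 : A j k = c j * x k := by rw [hc j]; rfl
    rw [e4, e3]
  have hγ0 : γ ≠ 0 := by
    intro h0
    have : A i k0 = 0 := by rw [hAjk i k0, h0]; ring
    rw [show A i k0 = x k0 from rfl] at this
    exact hk0 this
  obtain ⟨s, hs⟩ := IsAlgClosed.exists_pow_nat_eq γ (n := 2) (by norm_num)
  have hs0 : s ≠ 0 := by intro h; rw [h] at hs; simp at hs; exact hγ0 hs.symm
  refine ⟨s • x, smul_ne_zero hs0 hi, ?_, ?_⟩
  · rw [smul_dotProduct, dotProduct_smul, hxx]; simp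
  · ext j k
    rw [hAjk j k, vecMulVec_apply]
    simp only [Pi.smul_apply, smul_eq_mul]
    linear_combination (-(x j * x k)) * hs

lemma aux_conj_vecMulVec (g : Matrix (Fin 3) (Fin 3) ℂ) (x y : Fin 3 → ℂ) :
    g * vecMulVec x y * gᵀ = vecMulVec (g *ᵥ x) (g *ᵥ y) := by
  ext a b
  simp [mul_apply, vecMulVec_apply, mulVec, dotProduct, Fin.sum_univ_three, transpose_apply]
  ring

lemma aux_hyperbolic {u : Fin 3 → ℂ} (hu0 : u ≠ 0) (huu : u ⬝ᵥ u = 0) :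
    ∃ w : Fin 3 → ℂ, u ⬝ᵥ w = 2 ∧ w ⬝ᵥ w = 0 := by
  obtain ⟨i, hi⟩ : ∃ i, u i ≠ 0 := by
    by_contra hk; push_neg at hk; exact hu0 (funext fun k => hk k)
  refine ⟨((2 / u i) • (Pi.single i 1 : Fin 3 → ℂ)) - ((u i)^2)⁻¹ • u, ?_, ?_⟩
  · simp only [dotProduct_sub, dotProduct_smul, dotProduct_single, smul_eq_mul, huu, mul_one]
    field_simp
    ring
  · simp only [dotProduct_sub, sub_dotProduct, dotProduct_smul, smul_dotProduct,
      dotProduct_single, single_dotProduct, smul_eq_mul, huu, Pi.single_eq_same,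
      mul_one, one_mul, mul_zero, Pi.sub_apply, Pi.smul_apply]
    field_simp
    ring

/-- For any nonzero isotropic `u`, some `g ∈ SO₃(ℂ)` conjugates the base point to `u uᵀ`. -/
lemma aux_orbit {u : Fin 3 → ℂ} (hu0 : u ≠ 0) (huu : u ⬝ᵥ u = 0) :
    ∃ g : Matrix (Fin 3) (Fin 3) ℂ, gᵀ * g = 1 ∧ g.det = 1 ∧
      g * vecMulVec ![1, Complex.I, 0] ![1, Complex.I, 0] * gᵀ = vecMulVec u u := by
  obtain ⟨w, huw, hww⟩ := aux_hyperbolic hu0 huu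
  have hwu : w ⬝ᵥ u = 2 := by rw [dotProduct_comm]; exact huw
  set e : Fin 3 → ℂ := (2:ℂ)⁻¹ • (u + w) with he
  set f : Fin 3 → ℂ := (2*Complex.I)⁻¹ • (u - w) with hf
  have hee : e ⬝ᵥ e = 1 := by
    simp only [he, dotProduct_smul, smul_dotProduct, dotProduct_add, add_dotProduct,
      huu, huw, hwu, hww, smul_eq_mul]
    norm_num
  have hff : f ⬝ᵥ f = 1 := by
    simp only [hf, dotProduct_smul, smul_dotProduct, dotProduct_sub, sub_dotProduct,
      huu, huw, hwu, hww, smul_eq_mul]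
    field_simp
    linear_combination (-4:ℂ) * Complex.I_sq
  have hef : e ⬝ᵥ f = 0 := by
    simp only [he, hf, dotProduct_smul, smul_dotProduct, dotProduct_sub, sub_dotProduct,
      dotProduct_add, add_dotProduct, huu, huw, hwu, hww, smul_eq_mul]
    field_simp
    ring
  have hfe : f ⬝ᵥ e = 0 := by rw [dotProduct_comm]; exact hef
  set h : Fin 3 → ℂ := e ⨯₃ f with hh
  have heh : e ⬝ᵥ h = 0 := dot_self_cross e f
  have hfh : f ⬝ᵥ h = 0 := dot_cross_self e f
  have hhe : h ⬝ᵥ e = 0 := by rw [dotProduct_comm]; exact heh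
  have hhf : h ⬝ᵥ f = 0 := by rw [dotProduct_comm]; exact hfh
  have hhh : h ⬝ᵥ h = 1 := by
    rw [hh, cross_dot_cross, hee, hff, hef, hfe]; ring
  set g : Matrix (Fin 3) (Fin 3) ℂ := (Matrix.of ![e, f, h])ᵀ with hg
  have hentry : ∀ a b, (gᵀ * g) a b = ![e,f,h] a ⬝ᵥ ![e,f,h] b := by
    intro a b
    rw [mul_apply]
    rfl
  have horth : gᵀ * g = 1 := by
    ext a b
    rw [hentry a b]
    fin_cases a <;> fin_cases b <;>
      simp [one_apply, hee, hef, hfe, hff, heh, hfh, hhe, hhf, hhh]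
  refine ⟨g, horth, ?_, ?_⟩
  · rw [← det_transpose, hg, transpose_transpose]
    have hd : Matrix.det (Matrix.of ![e, f, h]) = e ⬝ᵥ f ⨯₃ h := (triple_product_eq_det e f h).symm
    rw [hd, triple_product_permutation, triple_product_permutation, ← hh, hhh]
  · have hgu : g *ᵥ ![1, Complex.I, 0] = u := by
      funext k
      have hmv : (g *ᵥ ![1, Complex.I, 0]) k = e k * 1 + g k 1 * Complex.I + g k 2 * 0 := by
        rw [mulVec, dotProduct, Fin.sum_univ_three]
        rfl
      rw [hmv]
      have hg1 : g k 1 = f k := rfl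
      have hg2 : g k 2 = h k := rfl
      rw [hg1, hg2]
      have hek : e k = 2⁻¹ * (u k + w k) := rfl
      have hfk : f k = (2*Complex.I)⁻¹ * (u k - w k) := rfl
      rw [hek, hfk]
      have h2I : (2*Complex.I)⁻¹ = -Complex.I/2 := by
        field_simp
        linear_combination (1:ℂ) * Complex.I_sq
      rw [h2I]
      ring_nf
      linear_combination ((w k - u k)/2) * Complex.I_sq
    rw [aux_conj_vecMulVec, hgu]

lemma aux_conj_conj (g₁ g₂ E : Matrix (Fin 3) (Fin 3) ℂ) (h : g₁ᵀ * g₁ = 1) :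
    (g₂ * g₁ᵀ) * (g₁ * E * g₁ᵀ) * (g₂ * g₁ᵀ)ᵀ = g₂ * E * g₂ᵀ := by
  rw [transpose_mul, transpose_transpose]
  simp only [Matrix.mul_assoc]
  rw [← Matrix.mul_assoc g₁ᵀ g₁ (E * _), h, Matrix.one_mul,
    ← Matrix.mul_assoc g₁ᵀ g₁ g₂ᵀ, h, Matrix.one_mul]

/-- The conjugation action of `SO₃(ℂ)` on nonzero symmetric square-zero `3 × 3`
complex matrices is transitive (note `g A g⁻¹ = g A gᵀ` for `g ∈ SO₃(ℂ)`). -/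
theorem stmt_8 (A B : Matrix (Fin 3) (Fin 3) ℂ)
    (hA0 : A ≠ 0) (hAsym : A = Aᵀ) (hAsq : A * A = 0)
    (hB0 : B ≠ 0) (hBsym : B = Bᵀ) (hBsq : B * B = 0) :
    ∃ g : Matrix (Fin 3) (Fin 3) ℂ, gᵀ * g = 1 ∧ g.det = 1 ∧ g * A * gᵀ = B := by
  obtain ⟨uA, huA0, huAA, hA⟩ := aux_rank_one hA0 hAsym hAsq
  obtain ⟨uB, huB0, huBB, hB⟩ := aux_rank_one hB0 hBsym hBsq
  obtain ⟨g₁, hg₁o, hg₁d, hg₁⟩ := aux_orbit huA0 huAA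
  obtain ⟨g₂, hg₂o, hg₂d, hg₂⟩ := aux_orbit huB0 huBB
  refine ⟨g₂ * g₁ᵀ, ?_, ?_, ?_⟩
  · rw [transpose_mul, transpose_transpose, Matrix.mul_assoc, ← Matrix.mul_assoc g₂ᵀ g₂ g₁ᵀ,
      hg₂o, Matrix.one_mul, mul_eq_one_comm.mp hg₁o]
  · rw [Matrix.det_mul, Matrix.det_transpose, hg₁d, hg₂d, mul_one]
  · rw [hA, ← hg₁, aux_conj_conj g₁ g₂ _ hg₁o, hg₂, ← hB]
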